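/- Let 0 < α < 1 and β > 0, let φ be an analytic self-map of the open unit disk D, and let g be analytic on D. Then the operator U_gC_φ, defined by (U_gC_φ f)(z) = ∫₀^z f(φ(ξ)) g'(ξ) dξ, is bounded from Z^α to Z^β if and only if g'·φ' ∈ H_{v_β}^∞ and g'' ∈ H_{v_β}^∞. -/

import Mathlib

noncomputable section

/-- The open unit disk in the complex plane. -/
def uD : Set ℂ := Metric.ball 0 1

/-- The Zygmund-type quantity `(1-|z|^2)^a * |f''(z)|`. -/
def zygS (a : ℝ) (f : ℂ → ℂ) (z : ℂ) : ℝ := (1 - ‖z‖ ^ 2) ^ a * ‖deriv (deriv f) z‖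

/-- Membership in the Zygmund-type space `Z^a`. -/
def memZ (a : ℝ) (f : ℂ → ℂ) : Prop :=
  AnalyticOn ℂ f uD ∧ ∃ M : ℝ, ∀ z ∈ uD, zygS a f z ≤ M

/-- The Zygmund-type norm `‖f‖_{Z^a} = |f 0| + |f' 0| + sup_{z ∈ D} (1-|z|^2)^a |f''(z)|`. -/
def zNorm (a : ℝ) (f : ℂ → ℂ) : ℝ := ‖f 0‖ + ‖deriv f 0‖ + sSup (zygS a f '' uD)

/-- Membership in the weighted space `H^∞_{v_b}` (for `u` analytic on `uD`). -/
def memHv (b : ℝ) (u : ℂ → ℂ) : Prop :=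
  ∃ M : ℝ, ∀ z ∈ uD, (1 - ‖z‖ ^ 2) ^ b * ‖u z‖ ≤ M

/-- `T` is a bounded operator from `Z^a` to `Z^b`. -/
def boundedOp (a b : ℝ) (T : (ℂ → ℂ) → ℂ → ℂ) : Prop :=
  (∀ f, memZ a f → memZ b (T f)) ∧
    ∃ C > 0, ∀ f, memZ a f → zNorm b (T f) ≤ C * zNorm a f

/-- `(U_g C_φ f)(z) = ∫₀^z f(φ(ξ)) g'(ξ) dξ`, parametrized along the segment from `0` to `z`. -/
def UgCphi (g φ : ℂ → ℂ) (f : ℂ → ℂ) : ℂ → ℂ :=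
  fun z => ∫ t in (0:ℝ)..1, z * (f (φ ((t : ℂ) * z)) * deriv g ((t : ℂ) * z))

lemma uD_open : IsOpen uD := Metric.isOpen_ball
lemma mem_uD {z : ℂ} : z ∈ uD ↔ ‖z‖ < 1 := by
  simp [uD, Metric.mem_ball, dist_eq_norm]
lemma zero_mem_uD : (0:ℂ) ∈ uD := by simp [mem_uD]

lemma smul_mem_uD {z : ℂ} (hz : z ∈ uD) {t : ℝ} (h0 : 0 ≤ t) (h1 : t ≤ 1) :
    (t:ℂ) * z ∈ uD := by
  rw [mem_uD] at hz ⊢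
  calc ‖(t:ℂ) * z‖ = t * ‖z‖ := by
        rw [norm_mul, Complex.norm_real, Real.norm_of_nonneg h0]
    _ ≤ 1 * ‖z‖ := by nlinarith [norm_nonneg z]
    _ < 1 := by simpa using hz

/-- analyticOn to analyticOnNhd on the open disk -/
lemma aon {f : ℂ → ℂ} (hf : AnalyticOn ℂ f uD) : AnalyticOnNhd ℂ f uD :=
  (hf.differentiableOn).analyticOnNhd uD_open
/-- Radial FTC: if `h` has derivative `h'` on `uD` with `h'` continuous on `uD`, then
`h z - h 0 = ∫₀¹ z h'(tz) dt`. -/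
lemma radialFTC {h h' : ℂ → ℂ} (hd : ∀ w ∈ uD, HasDerivAt h (h' w) w)
    (hc : ContinuousOn h' uD) {z : ℂ} (hz : z ∈ uD) :
    ∫ t in (0:ℝ)..1, z * h' ((t:ℂ) * z) = h z - h 0 := by
  have key : ∀ t ∈ Set.uIcc (0:ℝ) 1, HasDerivAt (fun s : ℝ => h ((s:ℂ) * z))
      (z * h' ((t:ℂ) * z)) t := by
    intro t ht
    rw [Set.uIcc_of_le (by norm_num)] at ht
    have hmem : (t:ℂ) * z ∈ uD := smul_mem_uD hz ht.1 ht.2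
    have h1 : HasDerivAt (fun w : ℂ => h (w * z)) (h' ((t:ℂ) * z) * z) (t:ℂ) := by
      have := (hd _ hmem).comp (t:ℂ) ((hasDerivAt_id (t:ℂ)).mul_const z)
      simp at this
      exact this
    have := h1.comp_ofReal
    simpa [mul_comm] using this
  have hcont : ContinuousOn (fun t : ℝ => z * h' ((t:ℂ) * z)) (Set.uIcc (0:ℝ) 1) := by
    apply ContinuousOn.mul continuousOn_const
    apply hc.comp
    · exact (Complex.continuous_ofReal.continuousOn.mul continuousOn_const)
    · intro t ht
      rw [Set.uIcc_of_le (by norm_num)] at ht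
      exact smul_mem_uD hz ht.1 ht.2
  have := intervalIntegral.integral_eq_sub_of_hasDerivAt key
    (hcont.intervalIntegrable)
  simpa using this
/-- Primitive: for `h` analytic on `uD`, `z ↦ ∫₀¹ z h(tz) dt` has derivative `h z₀` at `z₀ ∈ uD`. -/
lemma primitive_hasDerivAt {h : ℂ → ℂ} (ha : AnalyticOnNhd ℂ h uD) {z₀ : ℂ} (hz₀ : z₀ ∈ uD) :
    HasDerivAt (fun z => ∫ t in (0:ℝ)..1, z * h ((t:ℂ) * z)) (h z₀) z₀ := by
  set s : ℝ := (1 + ‖z₀‖) / 2 with hs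
  have hr : ‖z₀‖ < 1 := mem_uD.1 hz₀
  have hs1 : s < 1 := by rw [hs]; linarith
  have hs0 : ‖z₀‖ < s := by rw [hs]; linarith
  have hsnn : 0 ≤ s := by positivity
  set ε : ℝ := s - ‖z₀‖ with hε
  have hεpos : 0 < ε := sub_pos.2 hs0
  have hK : Metric.closedBall (0:ℂ) s ⊆ uD := by
    intro w hw
    rw [Metric.mem_closedBall, dist_zero_right] at hw
    exact mem_uD.2 (lt_of_le_of_lt hw hs1)
  -- bounds for h and deriv h on the closed ball
  have hKc : IsCompact (Metric.closedBall (0:ℂ) s) := isCompact_closedBall _ _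
  have hhc : ContinuousOn h (Metric.closedBall (0:ℂ) s) :=
    (ha.continuousOn).mono hK
  have hhc' : ContinuousOn (deriv h) (Metric.closedBall (0:ℂ) s) :=
    ((ha.deriv).continuousOn).mono hK
  obtain ⟨C₁, hC₁⟩ := hKc.exists_bound_of_continuousOn hhc
  obtain ⟨C₂, hC₂⟩ := hKc.exists_bound_of_continuousOn hhc'
  have hC₁0 : 0 ≤ C₁ := le_trans (norm_nonneg _) (hC₁ 0 (by simp [hsnn]))
  have hC₂0 : 0 ≤ C₂ := le_trans (norm_nonneg _) (hC₂ 0 (by simp [hsnn]))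
  -- membership facts
  have hmemK : ∀ (t : ℝ), t ∈ Set.Icc (0:ℝ) 1 → ∀ x : ℂ, ‖x‖ < s →
      (t:ℂ) * x ∈ Metric.closedBall (0:ℂ) s := by
    intro t ht x hx
    rw [Metric.mem_closedBall, dist_zero_right]
    calc ‖(t:ℂ) * x‖ = t * ‖x‖ := by
          rw [norm_mul, Complex.norm_real, Real.norm_of_nonneg ht.1]
      _ ≤ 1 * s := by nlinarith [norm_nonneg x, ht.2]
      _ = s := one_mul s
  have hballs : ∀ x ∈ Metric.ball z₀ ε, ‖x‖ < s := by
    intro x hx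
    rw [Metric.mem_ball, dist_eq_norm] at hx
    calc ‖x‖ = ‖x - z₀ + z₀‖ := by ring_nf
      _ ≤ ‖x - z₀‖ + ‖z₀‖ := norm_add_le _ _
      _ < ε + ‖z₀‖ := by linarith
      _ = s := by rw [hε]; ring
  have hz₀s : ‖z₀‖ < s := hs0
  -- continuity in t for fixed x with ‖x‖ < s
  have hcont : ∀ x : ℂ, ‖x‖ < s → ContinuousOn (fun t : ℝ => x * h ((t:ℂ) * x))
      (Set.Icc (0:ℝ) 1) := by
    intro x hx
    apply ContinuousOn.mul continuousOn_const
    apply hhc.comp ((Complex.continuous_ofReal.continuousOn).mul continuousOn_const)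
    intro t ht
    exact hmemK t ht x hx
  have hIsub : Set.uIoc (0:ℝ) 1 ⊆ Set.Icc (0:ℝ) 1 := by
    rw [Set.uIoc_of_le (by norm_num)]
    exact Set.Ioc_subset_Icc_self
  -- apply dominated differentiation
  have main := intervalIntegral.hasDerivAt_integral_of_dominated_loc_of_deriv_le
    (F := fun x : ℂ => fun t : ℝ => x * h ((t:ℂ) * x))
    (F' := fun x : ℂ => fun t : ℝ => h ((t:ℂ) * x) + x * (deriv h ((t:ℂ) * x) * (t:ℂ)))
    (x₀ := z₀) (a := 0) (b := 1) (μ := MeasureTheory.volume)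
    (bound := fun _ => C₁ + s * C₂) (Metric.ball_mem_nhds z₀ hεpos)
    ?_ ?_ ?_ ?_ ?_ ?_
  · obtain ⟨-, hD⟩ := main
    have hFTC : (∫ t in (0:ℝ)..1,
        (h ((t:ℂ) * z₀) + z₀ * (deriv h ((t:ℂ) * z₀) * (t:ℂ)))) = h z₀ := by
      have key : ∀ t ∈ Set.uIcc (0:ℝ) 1,
          HasDerivAt (fun u : ℝ => (u:ℂ) * h ((u:ℂ) * z₀))
            (h ((t:ℂ) * z₀) + z₀ * (deriv h ((t:ℂ) * z₀) * (t:ℂ))) t := by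
        intro t ht
        rw [Set.uIcc_of_le (by norm_num)] at ht
        have hmem : (t:ℂ) * z₀ ∈ uD := hK (hmemK t ht z₀ hz₀s)
        have hder : HasDerivAt h (deriv h ((t:ℂ) * z₀)) ((t:ℂ) * z₀) :=
          ((ha _ hmem).differentiableAt).hasDerivAt
        have hinner : HasDerivAt (fun w : ℂ => h (w * z₀))
            (deriv h ((t:ℂ) * z₀) * z₀) (t:ℂ) := by
          have := hder.comp (t:ℂ) ((hasDerivAt_id (t:ℂ)).mul_const z₀)
          simp at this
          exact this
        have hprod : HasDerivAt (fun w : ℂ => w * h (w * z₀))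
            (1 * h ((t:ℂ) * z₀) + (t:ℂ) * (deriv h ((t:ℂ) * z₀) * z₀)) (t:ℂ) :=
          (hasDerivAt_id (t:ℂ)).mul hinner
        have := hprod.comp_ofReal
        convert this using 1
        ring
      have hcont2 : ContinuousOn
          (fun t : ℝ => h ((t:ℂ) * z₀) + z₀ * (deriv h ((t:ℂ) * z₀) * (t:ℂ)))
          (Set.uIcc (0:ℝ) 1) := by
        rw [Set.uIcc_of_le (by norm_num)]
        have hom : ContinuousOn (fun t : ℝ => (t:ℂ) * z₀) (Set.Icc (0:ℝ) 1) :=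
          (Complex.continuous_ofReal.continuousOn).mul continuousOn_const
        have hmaps : ∀ t ∈ Set.Icc (0:ℝ) 1, (t:ℂ) * z₀ ∈ Metric.closedBall (0:ℂ) s :=
          fun t ht => hmemK t ht z₀ hz₀s
        exact (hhc.comp hom hmaps).add (continuousOn_const.mul
          ((hhc'.comp hom hmaps).mul (Complex.continuous_ofReal.continuousOn)))
      have := intervalIntegral.integral_eq_sub_of_hasDerivAt key hcont2.intervalIntegrable
      simpa using this
    rw [hFTC] at hD
    exact hD
  · -- measurability in a nhd
    filter_upwards [Metric.ball_mem_nhds z₀ hεpos] with x hx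
    exact ((hcont x (hballs x hx)).mono hIsub).aestronglyMeasurable
      (measurableSet_uIoc)
  · exact ((hcont z₀ hz₀s).mono (by rw [Set.uIcc_of_le (by norm_num)])).intervalIntegrable
  · exact (ContinuousOn.aestronglyMeasurable (by
      have hom : ContinuousOn (fun t : ℝ => (t:ℂ) * z₀) (Set.Icc (0:ℝ) 1) :=
        (Complex.continuous_ofReal.continuousOn).mul continuousOn_const
      have hmaps : ∀ t ∈ Set.Icc (0:ℝ) 1, (t:ℂ) * z₀ ∈ Metric.closedBall (0:ℂ) s :=
        fun t ht => hmemK t ht z₀ hz₀s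
      exact (((hhc.comp hom hmaps).add (continuousOn_const.mul
        ((hhc'.comp hom hmaps).mul (Complex.continuous_ofReal.continuousOn)))).mono hIsub))
      measurableSet_uIoc)
  · -- bound
    filter_upwards with t
    intro ht x hx
    have hxs := hballs x hx
    have ht' : t ∈ Set.Icc (0:ℝ) 1 := hIsub ht
    have hmem := hmemK t ht' x hxs
    have h1 : ‖h ((t:ℂ) * x)‖ ≤ C₁ := hC₁ _ hmem
    have h2 : ‖deriv h ((t:ℂ) * x)‖ ≤ C₂ := hC₂ _ hmem
    calc ‖h ((t:ℂ) * x) + x * (deriv h ((t:ℂ) * x) * (t:ℂ))‖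
        ≤ ‖h ((t:ℂ) * x)‖ + ‖x‖ * (‖deriv h ((t:ℂ) * x)‖ * ‖(t:ℂ)‖) := by
          refine le_trans (norm_add_le _ _) ?_
          simp [norm_mul]
      _ ≤ C₁ + s * C₂ := by
          have hxnn : (0:ℝ) ≤ ‖x‖ := norm_nonneg x
          have htn : ‖(t:ℂ)‖ ≤ 1 := by
            rw [Complex.norm_real, Real.norm_of_nonneg ht'.1]; exact ht'.2
          have hdn : (0:ℝ) ≤ ‖deriv h ((t:ℂ) * x)‖ := norm_nonneg _
          have h3 : ‖deriv h ((t:ℂ) * x)‖ * ‖(t:ℂ)‖ ≤ C₂ := by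
            nlinarith [norm_nonneg ((t:ℂ))]
          have h4 : ‖x‖ * (‖deriv h ((t:ℂ) * x)‖ * ‖(t:ℂ)‖) ≤ s * C₂ :=
            mul_le_mul hxs.le h3 (by positivity) hsnn
          linarith
  · exact intervalIntegrable_const
  · -- differentiability in x
    filter_upwards with t
    intro ht x hx
    have hxs := hballs x hx
    have ht' : t ∈ Set.Icc (0:ℝ) 1 := hIsub ht
    have hmem : (t:ℂ) * x ∈ uD := hK (hmemK t ht' x hxs)
    have hder : HasDerivAt h (deriv h ((t:ℂ) * x)) ((t:ℂ) * x) :=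
      ((ha _ hmem).differentiableAt).hasDerivAt
    have hinner : HasDerivAt (fun y : ℂ => h ((t:ℂ) * y))
        (deriv h ((t:ℂ) * x) * (t:ℂ)) x := by
      have := hder.comp x ((hasDerivAt_id x).const_mul (t:ℂ))
      simp at this
      exact this
    have := (hasDerivAt_id x).mul hinner
    simp at this
    exact this
lemma integral_weight_bound {M α r : ℝ} (hM : 0 ≤ M) (hα0 : 0 < α) (hα1 : α < 1)
    (hr0 : 0 ≤ r) (hr1 : r < 1) :
    (∫ t in (0:ℝ)..1, r * M * (1 - t * r) ^ (-α)) ≤ M / (1 - α) := by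
  have h1α : (0:ℝ) < 1 - α := by linarith
  have hpos : ∀ t ∈ Set.Icc (0:ℝ) 1, (0:ℝ) < 1 - t * r := by
    intro t ht
    nlinarith [ht.1, ht.2]
  have key : ∀ t ∈ Set.uIcc (0:ℝ) 1,
      HasDerivAt (fun t : ℝ => -(M / (1 - α)) * (1 - t * r) ^ (1 - α))
        (r * M * (1 - t * r) ^ (-α)) t := by
    intro t ht
    rw [Set.uIcc_of_le (by norm_num)] at ht
    have hb : (0:ℝ) < 1 - t * r := hpos t ht
    have hu : HasDerivAt (fun t : ℝ => 1 - t * r) (-r) t := by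
      simpa using ((hasDerivAt_id t).mul_const r).const_sub 1
    have hrp : HasDerivAt (fun x : ℝ => x ^ (1 - α)) ((1 - α) * (1 - t * r) ^ (1 - α - 1))
        (1 - t * r) := Real.hasDerivAt_rpow_const (Or.inl (ne_of_gt hb))
    have hcomp := (hrp.comp t hu).const_mul (-(M / (1 - α)))
    convert hcomp using 1
    · rfl
    · rfl
    · rfl
    have : (1 : ℝ) - α - 1 = -α := by ring
    rw [this]
    field_simp
  have hcont : ContinuousOn (fun t : ℝ => r * M * (1 - t * r) ^ (-α)) (Set.uIcc (0:ℝ) 1) := by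
    rw [Set.uIcc_of_le (by norm_num)]
    apply ContinuousOn.mul continuousOn_const
    apply ContinuousOn.rpow_const
    · exact (continuousOn_const.sub ((continuousOn_id).mul continuousOn_const))
    · intro t ht
      exact Or.inl (ne_of_gt (hpos t ht))
  have := intervalIntegral.integral_eq_sub_of_hasDerivAt key hcont.intervalIntegrable
  rw [this]
  have hnn : (0:ℝ) ≤ (1 - 1 * r) ^ (1 - α) := Real.rpow_nonneg (by linarith) _
  have h0 : ((1:ℝ) - 0 * r) ^ (1 - α) = 1 := by norm_num
  rw [h0]
  have hMd : 0 ≤ M / (1 - α) := div_nonneg hM h1α.le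
  nlinarith [mul_nonneg hMd hnn]

/-- Growth of `f'` from the Zygmund bound. -/
lemma deriv_growth {f : ℂ → ℂ} (hf : AnalyticOnNhd ℂ f uD) {α M : ℝ} (hα0 : 0 < α)
    (hα1 : α < 1) (hM0 : 0 ≤ M)
    (hM : ∀ z ∈ uD, (1 - ‖z‖ ^ 2) ^ α * ‖deriv (deriv f) z‖ ≤ M) {z : ℂ} (hz : z ∈ uD) :
    ‖deriv f z‖ ≤ ‖deriv f 0‖ + M / (1 - α) := by
  have hr1 : ‖z‖ < 1 := mem_uD.1 hz
  have hr0 : (0:ℝ) ≤ ‖z‖ := norm_nonneg z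
  have hFTC := radialFTC (h := deriv f) (h' := deriv (deriv f))
    (fun w hw => ((hf.deriv w hw).differentiableAt).hasDerivAt)
    ((hf.deriv.deriv).continuousOn) hz
  -- pointwise bound
  have hpt : ∀ t ∈ Set.Ioc (0:ℝ) 1,
      ‖z * deriv (deriv f) ((t:ℂ) * z)‖ ≤ ‖z‖ * M * (1 - t * ‖z‖) ^ (-α) := by
    intro t ht
    have ht0 : (0:ℝ) ≤ t := ht.1.le
    have hw : (t:ℂ) * z ∈ uD := smul_mem_uD hz ht0 ht.2
    have hwn : ‖(t:ℂ) * z‖ = t * ‖z‖ := by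
      rw [norm_mul, Complex.norm_real, Real.norm_of_nonneg ht0]
    have hb : (0:ℝ) < 1 - t * ‖z‖ := by nlinarith [ht.2]
    have hcmp : (1 - t * ‖z‖) ^ α ≤ (1 - ‖(t:ℂ) * z‖ ^ 2) ^ α := by
      apply Real.rpow_le_rpow hb.le _ hα0.le
      rw [hwn]
      nlinarith [ht.2, mem_uD.1 hw, norm_nonneg ((t:ℂ) * z), hwn]
    have h1 : (1 - t * ‖z‖) ^ α * ‖deriv (deriv f) ((t:ℂ) * z)‖ ≤ M :=
      le_trans (mul_le_mul_of_nonneg_right hcmp (norm_nonneg _)) (hM _ hw)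
    have hcp : (0:ℝ) < (1 - t * ‖z‖) ^ α := Real.rpow_pos_of_pos hb α
    have h2 : ‖deriv (deriv f) ((t:ℂ) * z)‖ ≤ M * (1 - t * ‖z‖) ^ (-α) := by
      rw [Real.rpow_neg hb.le]
      rw [mul_comm] at h1
      calc ‖deriv (deriv f) ((t:ℂ) * z)‖ = ‖deriv (deriv f) ((t:ℂ) * z)‖ := rfl
        _ ≤ M / (1 - t * ‖z‖) ^ α := (le_div_iff₀ hcp).2 h1
        _ = M * ((1 - t * ‖z‖) ^ α)⁻¹ := div_eq_mul_inv _ _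
    calc ‖z * deriv (deriv f) ((t:ℂ) * z)‖ = ‖z‖ * ‖deriv (deriv f) ((t:ℂ) * z)‖ :=
          norm_mul _ _
      _ ≤ ‖z‖ * (M * (1 - t * ‖z‖) ^ (-α)) := mul_le_mul_of_nonneg_left h2 hr0
      _ = ‖z‖ * M * (1 - t * ‖z‖) ^ (-α) := by ring
  have hgc : ContinuousOn (fun t : ℝ => ‖z‖ * M * (1 - t * ‖z‖) ^ (-α))
      (Set.uIcc (0:ℝ) 1) := by
    rw [Set.uIcc_of_le (by norm_num)]
    apply ContinuousOn.mul continuousOn_const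
    apply ContinuousOn.rpow_const
    · exact (continuousOn_const.sub ((continuousOn_id).mul continuousOn_const))
    · intro t ht
      refine Or.inl (ne_of_gt ?_)
      nlinarith [ht.1, ht.2]
  have hnorm : ‖∫ t in (0:ℝ)..1, z * deriv (deriv f) ((t:ℂ) * z)‖ ≤
      |∫ t in (0:ℝ)..1, ‖z‖ * M * (1 - t * ‖z‖) ^ (-α)| := by
    apply intervalIntegral.norm_integral_le_abs_of_norm_le _ hgc.intervalIntegrable
    rw [MeasureTheory.ae_restrict_iff' measurableSet_uIoc]
    filter_upwards with t ht
    rw [Set.uIoc_of_le (by norm_num)] at ht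
    exact hpt t ht
  have hint0 : (0:ℝ) ≤ ∫ t in (0:ℝ)..1, ‖z‖ * M * (1 - t * ‖z‖) ^ (-α) := by
    apply intervalIntegral.integral_nonneg (by norm_num)
    intro t ht
    have : (0:ℝ) ≤ (1 - t * ‖z‖) ^ (-α) := Real.rpow_nonneg (by nlinarith [ht.1, ht.2]) _
    positivity
  have hintle : (∫ t in (0:ℝ)..1, ‖z‖ * M * (1 - t * ‖z‖) ^ (-α)) ≤ M / (1 - α) :=
    integral_weight_bound hM0 hα0 hα1 hr0 hr1
  rw [hFTC] at hnorm
  rw [abs_of_nonneg hint0] at hnorm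
  calc ‖deriv f z‖ = ‖deriv f 0 + (deriv f z - deriv f 0)‖ := by ring_nf
    _ ≤ ‖deriv f 0‖ + ‖deriv f z - deriv f 0‖ := norm_add_le _ _
    _ ≤ ‖deriv f 0‖ + M / (1 - α) := by linarith

/-- Growth of `f` from a bound on `f'`. -/
lemma value_growth {f : ℂ → ℂ} (hf : AnalyticOnNhd ℂ f uD) {B : ℝ}
    (hB : ∀ w ∈ uD, ‖deriv f w‖ ≤ B) {z : ℂ} (hz : z ∈ uD) : ‖f z‖ ≤ ‖f 0‖ + B := by
  have hFTC := radialFTC (h := f) (h' := deriv f)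
    (fun w hw => ((hf w hw).differentiableAt).hasDerivAt)
    ((hf.deriv).continuousOn) hz
  have hbd : ‖∫ t in (0:ℝ)..1, z * deriv f ((t:ℂ) * z)‖ ≤ B * |1 - 0| := by
    apply intervalIntegral.norm_integral_le_of_norm_le_const
    intro t ht
    rw [Set.uIoc_of_le (by norm_num)] at ht
    have hw : (t:ℂ) * z ∈ uD := smul_mem_uD hz ht.1.le ht.2
    calc ‖z * deriv f ((t:ℂ) * z)‖ = ‖z‖ * ‖deriv f ((t:ℂ) * z)‖ := norm_mul _ _
      _ ≤ 1 * B := by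
        apply mul_le_mul (mem_uD.1 hz).le (hB _ hw) (norm_nonneg _) zero_le_one
      _ = B := one_mul B
  rw [hFTC] at hbd
  simp only [sub_zero, abs_one, mul_one] at hbd
  calc ‖f z‖ = ‖f 0 + (f z - f 0)‖ := by ring_nf
    _ ≤ ‖f 0‖ + ‖f z - f 0‖ := norm_add_le _ _
    _ ≤ ‖f 0‖ + B := by linarith
lemma Tf_props {φ g : ℂ → ℂ} (hφ : AnalyticOnNhd ℂ φ uD) (hφm : Set.MapsTo φ uD uD)
    (hg : AnalyticOnNhd ℂ g uD) {f : ℂ → ℂ} (hfa : AnalyticOnNhd ℂ f uD) :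
    AnalyticOnNhd ℂ (fun z => ∫ t in (0:ℝ)..1,
        z * (f (φ ((t:ℂ) * z)) * deriv g ((t:ℂ) * z))) uD ∧
      (∫ t in (0:ℝ)..1, (0:ℂ) * (f (φ ((t:ℂ) * 0)) * deriv g ((t:ℂ) * 0))) = 0 ∧
      deriv (fun z => ∫ t in (0:ℝ)..1,
        z * (f (φ ((t:ℂ) * z)) * deriv g ((t:ℂ) * z))) 0 = f (φ 0) * deriv g 0 ∧
      ∀ z ∈ uD, deriv (deriv (fun z => ∫ t in (0:ℝ)..1,
        z * (f (φ ((t:ℂ) * z)) * deriv g ((t:ℂ) * z)))) z =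
        deriv f (φ z) * deriv φ z * deriv g z + f (φ z) * deriv (deriv g) z := by
  set h : ℂ → ℂ := fun w => f (φ w) * deriv g w with hh
  have hha : AnalyticOnNhd ℂ h uD := (hfa.comp hφ hφm).mul hg.deriv
  set T : ℂ → ℂ := fun z => ∫ t in (0:ℝ)..1, z * (f (φ ((t:ℂ) * z)) * deriv g ((t:ℂ) * z))
    with hT
  have hTd : ∀ z ∈ uD, HasDerivAt T (h z) z := fun z hz => primitive_hasDerivAt hha hz
  have hTD : DifferentiableOn ℂ T uD := fun z hz => ((hTd z hz).differentiableAt).differentiableWithinAt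
  have hTa : AnalyticOnNhd ℂ T uD := hTD.analyticOnNhd uD_open
  have hderivT : ∀ z ∈ uD, deriv T z = h z := fun z hz => (hTd z hz).deriv
  refine ⟨hTa, by simp, ?_, ?_⟩
  · have := hderivT 0 zero_mem_uD
    exact this
  · intro z hz
    have hev : deriv T =ᶠ[nhds z] h := by
      filter_upwards [uD_open.mem_nhds hz] with w hw
      exact hderivT w hw
    rw [hev.deriv_eq]
    have hfd : HasDerivAt (fun w => f (φ w)) (deriv f (φ z) * deriv φ z) z :=
      ((hfa _ (hφm hz)).differentiableAt.hasDerivAt).comp z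
        ((hφ _ hz).differentiableAt.hasDerivAt)
    have hgd : HasDerivAt (deriv g) (deriv (deriv g) z) z :=
      ((hg.deriv _ hz).differentiableAt).hasDerivAt
    have := (hfd.mul hgd).deriv
    rw [hh]
    exact this

set_option maxHeartbeats 1000000 in
theorem stmt_11 (α β : ℝ) (hα0 : 0 < α) (hα1 : α < 1) (hβ : 0 < β)
    (φ g : ℂ → ℂ) (hφ : AnalyticOn ℂ φ uD) (hφm : Set.MapsTo φ uD uD)
    (hg : AnalyticOn ℂ g uD) :
    boundedOp α β (UgCphi g φ) ↔
      (memHv β (fun z => deriv g z * deriv φ z) ∧ memHv β (deriv (deriv g))) := by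
  have hφn : AnalyticOnNhd ℂ φ uD := aon hφ
  have hgn : AnalyticOnNhd ℂ g uD := aon hg
  have hwnn : ∀ z ∈ uD, (0:ℝ) ≤ (1 - ‖z‖ ^ 2) ^ β := by
    intro z hz
    have := mem_uD.1 hz
    apply Real.rpow_nonneg
    nlinarith [norm_nonneg z]
  constructor
  · rintro ⟨hmap, -⟩
    -- test function f = 1
    have h1 : memZ α (fun _ : ℂ => (1:ℂ)) := by
      refine ⟨analyticOn_const, 0, fun z hz => ?_⟩
      simp [zygS]
    obtain ⟨-, M₀, hM₀⟩ := hmap _ h1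
    have hp1 := Tf_props hφn hφm hgn (analyticOnNhd_const (v := (1:ℂ)))
    have hgdd : ∀ z ∈ uD, (1 - ‖z‖ ^ 2) ^ β * ‖deriv (deriv g) z‖ ≤ M₀ := by
      intro z hz
      have hd2 := hp1.2.2.2 z hz
      have := hM₀ z hz
      rw [zygS] at this
      rw [show (UgCphi g φ fun _ => (1:ℂ)) = (fun z => ∫ t in (0:ℝ)..1,
        z * ((fun _ : ℂ => (1:ℂ)) (φ ((t:ℂ) * z)) * deriv g ((t:ℂ) * z))) from rfl] at this
      rw [hd2] at this
      simpa using this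
    refine ⟨?_, M₀, hgdd⟩
    -- test function f = id
    have h2 : memZ α (fun z : ℂ => z) := by
      refine ⟨(analyticOnNhd_id).analyticOn, 0, fun z hz => ?_⟩
      simp [zygS]
    obtain ⟨-, M₁, hM₁⟩ := hmap _ h2
    have hp2 := Tf_props hφn hφm hgn (analyticOnNhd_id (𝕜 := ℂ))
    refine ⟨M₁ + M₀, fun z hz => ?_⟩
    have hd2 := hp2.2.2.2 z hz
    have hbig := hM₁ z hz
    rw [zygS] at hbig
    rw [show (UgCphi g φ fun z : ℂ => z) = (fun z => ∫ t in (0:ℝ)..1,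
        z * ((fun w : ℂ => w) (φ ((t:ℂ) * z)) * deriv g ((t:ℂ) * z))) from rfl] at hbig
    rw [hd2] at hbig
    simp only [deriv_id''] at hbig
    -- hbig : (1-‖z‖^2)^β * ‖1 * deriv φ z * deriv g z + φ z * deriv (deriv g) z‖ ≤ M₁
    have hφ1 : ‖φ z‖ ≤ 1 := (mem_uD.1 (hφm hz)).le
    have hw := hwnn z hz
    have key : ‖deriv g z * deriv φ z‖ ≤
        ‖1 * deriv φ z * deriv g z + φ z * deriv (deriv g) z‖ + ‖φ z‖ * ‖deriv (deriv g) z‖ := by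
      have : deriv g z * deriv φ z =
          (1 * deriv φ z * deriv g z + φ z * deriv (deriv g) z) - φ z * deriv (deriv g) z := by
        ring
      rw [this]
      refine le_trans (norm_sub_le _ _) ?_
      rw [norm_mul]
    have hgz := hgdd z hz
    calc (1 - ‖z‖ ^ 2) ^ β * ‖deriv g z * deriv φ z‖
        ≤ (1 - ‖z‖ ^ 2) ^ β * (‖1 * deriv φ z * deriv g z + φ z * deriv (deriv g) z‖
            + ‖φ z‖ * ‖deriv (deriv g) z‖) := mul_le_mul_of_nonneg_left key hw
      _ = (1 - ‖z‖ ^ 2) ^ β * ‖1 * deriv φ z * deriv g z + φ z * deriv (deriv g) z‖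
            + ‖φ z‖ * ((1 - ‖z‖ ^ 2) ^ β * ‖deriv (deriv g) z‖) := by ring
      _ ≤ M₁ + 1 * M₀ := by
          have h2' : ‖φ z‖ * ((1 - ‖z‖ ^ 2) ^ β * ‖deriv (deriv g) z‖) ≤ 1 * M₀ :=
            mul_le_mul hφ1 hgz (mul_nonneg hw (norm_nonneg _)) zero_le_one
          linarith
      _ = M₁ + M₀ := by ring
  · rintro ⟨⟨M₁, hM₁⟩, ⟨M₂, hM₂⟩⟩
    have hM₁0 : 0 ≤ M₁ := by
      have h := hM₁ 0 zero_mem_uD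
      have h2 : (0:ℝ) ≤ (1 - ‖(0:ℂ)‖ ^ 2) ^ β * ‖deriv g 0 * deriv φ 0‖ :=
        mul_nonneg (Real.rpow_nonneg (by simp) _) (norm_nonneg _)
      linarith
    have hM₂0 : 0 ≤ M₂ := by
      have h := hM₂ 0 zero_mem_uD
      have h2 : (0:ℝ) ≤ (1 - ‖(0:ℂ)‖ ^ 2) ^ β * ‖deriv (deriv g) 0‖ :=
        mul_nonneg (Real.rpow_nonneg (by simp) _) (norm_nonneg _)
      linarith
    have hα' : (0:ℝ) < 1 - α := by linarith
    have hc : (0:ℝ) < 1 / (1 - α) := by positivity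
    set C : ℝ := (‖deriv g 0‖ + M₂) * (2 + 1 / (1 - α)) + M₁ * (1 + 1 / (1 - α)) + 1 with hC
    have hC0 : 0 < C := by
      have h1 : (0:ℝ) ≤ (‖deriv g 0‖ + M₂) * (2 + 1 / (1 - α)) :=
        mul_nonneg (by positivity) (by positivity)
      have h2 : (0:ℝ) ≤ M₁ * (1 + 1 / (1 - α)) := mul_nonneg hM₁0 (by positivity)
      rw [hC]; linarith
    have key : ∀ f, memZ α f →
        memZ β (UgCphi g φ f) ∧ zNorm β (UgCphi g φ f) ≤ C * zNorm α f := by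
      intro f hf
      obtain ⟨hfA, M, hM⟩ := hf
      have hfa : AnalyticOnNhd ℂ f uD := aon hfA
      have hprops := Tf_props hφn hφm hgn hfa
      have hbdd : BddAbove (zygS α f '' uD) := by
        refine ⟨M, ?_⟩
        rintro x ⟨z, hz, rfl⟩
        exact hM z hz
      set S : ℝ := sSup (zygS α f '' uD) with hS
      have hSz : ∀ z ∈ uD, zygS α f z ≤ S := fun z hz =>
        le_csSup hbdd (Set.mem_image_of_mem _ hz)
      have hzy0 : (0:ℝ) ≤ zygS α f 0 :=
        mul_nonneg (Real.rpow_nonneg (by simp) _) (norm_nonneg _)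
      have hS0 : (0:ℝ) ≤ S := le_trans hzy0 (hSz 0 zero_mem_uD)
      have hN : zNorm α f = ‖f 0‖ + ‖deriv f 0‖ + S := rfl
      have hN0 : 0 ≤ zNorm α f := by
        rw [hN]; positivity
      set B' : ℝ := ‖deriv f 0‖ + S / (1 - α) with hB'def
      have hB' : ∀ w ∈ uD, ‖deriv f w‖ ≤ B' :=
        fun w hw => deriv_growth hfa hα0 hα1 hS0 (fun z hz => hSz z hz) hw
      set B : ℝ := ‖f 0‖ + B' with hBdef
      have hB : ∀ w ∈ uD, ‖f w‖ ≤ B := fun w hw => value_growth hfa hB' hw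
      have hB'0 : 0 ≤ B' := by rw [hB'def]; positivity
      have hB0 : 0 ≤ B := by rw [hBdef]; positivity
      have hSN : S ≤ zNorm α f := by
        rw [hN]; linarith [norm_nonneg (f 0), norm_nonneg (deriv f 0)]
      have hf0N : ‖f 0‖ ≤ zNorm α f := by
        rw [hN]; linarith [norm_nonneg (deriv f 0), hS0]
      have hf'0N : ‖deriv f 0‖ ≤ zNorm α f := by
        rw [hN]; linarith [norm_nonneg (f 0), hS0]
      have hB'N : B' ≤ (1 + 1 / (1 - α)) * zNorm α f := by
        rw [hB'def]
        have : S / (1 - α) = S * (1 / (1 - α)) := by ring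
        rw [this]
        have h2 : S * (1 / (1 - α)) ≤ zNorm α f * (1 / (1 - α)) :=
          mul_le_mul_of_nonneg_right hSN hc.le
        nlinarith
      have hBN : B ≤ (2 + 1 / (1 - α)) * zNorm α f := by
        rw [hBdef]
        nlinarith
      -- the central second-derivative estimate
      have hzy : ∀ z ∈ uD, zygS β (UgCphi g φ f) z ≤ B' * M₁ + B * M₂ := by
        intro z hz
        rw [zygS]
        rw [show (UgCphi g φ f) = (fun z => ∫ t in (0:ℝ)..1,
          z * (f (φ ((t:ℂ) * z)) * deriv g ((t:ℂ) * z))) from rfl]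
        rw [hprops.2.2.2 z hz]
        have hw := hwnn z hz
        have ht1 : (1 - ‖z‖ ^ 2) ^ β * ‖deriv f (φ z) * deriv φ z * deriv g z‖ ≤ B' * M₁ := by
          have hnorm : ‖deriv f (φ z) * deriv φ z * deriv g z‖ =
              ‖deriv f (φ z)‖ * ‖deriv g z * deriv φ z‖ := by
            rw [norm_mul, norm_mul, norm_mul]; ring
          rw [hnorm]
          calc (1 - ‖z‖ ^ 2) ^ β * (‖deriv f (φ z)‖ * ‖deriv g z * deriv φ z‖)
              = ‖deriv f (φ z)‖ * ((1 - ‖z‖ ^ 2) ^ β * ‖deriv g z * deriv φ z‖) := by ring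
            _ ≤ B' * M₁ := mul_le_mul (hB' _ (hφm hz)) (hM₁ z hz)
                (mul_nonneg hw (norm_nonneg _)) hB'0
        have ht2 : (1 - ‖z‖ ^ 2) ^ β * ‖f (φ z) * deriv (deriv g) z‖ ≤ B * M₂ := by
          rw [norm_mul]
          calc (1 - ‖z‖ ^ 2) ^ β * (‖f (φ z)‖ * ‖deriv (deriv g) z‖)
              = ‖f (φ z)‖ * ((1 - ‖z‖ ^ 2) ^ β * ‖deriv (deriv g) z‖) := by ring
            _ ≤ B * M₂ := mul_le_mul (hB _ (hφm hz)) (hM₂ z hz)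
                (mul_nonneg hw (norm_nonneg _)) hB0
        calc (1 - ‖z‖ ^ 2) ^ β *
            ‖deriv f (φ z) * deriv φ z * deriv g z + f (φ z) * deriv (deriv g) z‖
            ≤ (1 - ‖z‖ ^ 2) ^ β * (‖deriv f (φ z) * deriv φ z * deriv g z‖
              + ‖f (φ z) * deriv (deriv g) z‖) :=
              mul_le_mul_of_nonneg_left (norm_add_le _ _) hw
          _ = (1 - ‖z‖ ^ 2) ^ β * ‖deriv f (φ z) * deriv φ z * deriv g z‖
              + (1 - ‖z‖ ^ 2) ^ β * ‖f (φ z) * deriv (deriv g) z‖ := by ring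
          _ ≤ B' * M₁ + B * M₂ := add_le_add ht1 ht2
      have hmemZ : memZ β (UgCphi g φ f) := by
        refine ⟨hprops.1.analyticOn, B' * M₁ + B * M₂, hzy⟩
      refine ⟨hmemZ, ?_⟩
      -- the norm estimate
      have hT0 : (UgCphi g φ f) 0 = 0 := hprops.2.1
      have hT'0 : deriv (UgCphi g φ f) 0 = f (φ 0) * deriv g 0 := hprops.2.2.1
      have hsup : sSup (zygS β (UgCphi g φ f) '' uD) ≤ B' * M₁ + B * M₂ := by
        apply Real.sSup_le
        · rintro x ⟨z, hz, rfl⟩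
          exact hzy z hz
        · have h1 : 0 ≤ B' * M₁ := mul_nonneg hB'0 hM₁0
          have h2 : 0 ≤ B * M₂ := mul_nonneg hB0 hM₂0
          linarith
      have hznorm : zNorm β (UgCphi g φ f) =
          ‖(UgCphi g φ f) 0‖ + ‖deriv (UgCphi g φ f) 0‖ +
            sSup (zygS β (UgCphi g φ f) '' uD) := rfl
      rw [hznorm, hT0, hT'0]
      simp only [norm_zero]
      have hd0 : ‖f (φ 0) * deriv g 0‖ ≤ B * ‖deriv g 0‖ := by
        rw [norm_mul]
        exact mul_le_mul_of_nonneg_right (hB _ (hφm zero_mem_uD)) (norm_nonneg _)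
      have step1 : ‖f (φ 0) * deriv g 0‖ + (B' * M₁ + B * M₂) ≤
          B * (‖deriv g 0‖ + M₂) + B' * M₁ := by nlinarith
      have step2 : B * (‖deriv g 0‖ + M₂) ≤
          ((2 + 1 / (1 - α)) * zNorm α f) * (‖deriv g 0‖ + M₂) :=
        mul_le_mul_of_nonneg_right hBN (by positivity)
      have step3 : B' * M₁ ≤ ((1 + 1 / (1 - α)) * zNorm α f) * M₁ :=
        mul_le_mul_of_nonneg_right hB'N hM₁0
      have : (0:ℝ) + ‖f (φ 0) * deriv g 0‖ + (B' * M₁ + B * M₂) ≤ C * zNorm α f := by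
        rw [hC]
        calc (0:ℝ) + ‖f (φ 0) * deriv g 0‖ + (B' * M₁ + B * M₂)
            ≤ B * (‖deriv g 0‖ + M₂) + B' * M₁ := by linarith [step1]
          _ ≤ (2 + 1 / (1 - α)) * zNorm α f * (‖deriv g 0‖ + M₂)
              + (1 + 1 / (1 - α)) * zNorm α f * M₁ := add_le_add step2 step3
          _ = ((‖deriv g 0‖ + M₂) * (2 + 1 / (1 - α)) + M₁ * (1 + 1 / (1 - α)))
              * zNorm α f := by ring
          _ ≤ ((‖deriv g 0‖ + M₂) * (2 + 1 / (1 - α)) + M₁ * (1 + 1 / (1 - α)) + 1)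
              * zNorm α f := by nlinarith [hN0]
      linarith [hsup, this]
    exact ⟨fun f hf => (key f hf).1, C, hC0, fun f hf => (key f hf).2⟩
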